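/- Let n = 2n₁ + n₂ and let C be an n × n matrix over ℤ such that σ⁻¹Cσ = C, where σ is the permutation (1 2)(3 4)···(2n₁−1 2n₁) ∈ S_n (fixing 2n₁+1, …, n). Write C in block form C = [[C₀, C₂],[C₂ᵗ, C₁]] with C₀ of size 2n₁ × 2n₁ and C₁ of size n₂ × n₂. Then det(C) ≡ det(C₀)·det(C₁) (mod 2). -/

import Mathlib

open Matrix

variable {ι κ : Type*} [Fintype ι] [Fintype κ] [DecidableEq ι] [DecidableEq κ]

/-- det of [[a,b],[b,a]] in a commutative ring. -/
lemma aux_det_swapBlocks {R : Type*} [CommRing R] (a b : Matrix ι ι R) :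
    (fromBlocks a b b a).det = (a + b).det * (a - b).det := by
  have h : fromBlocks (1 : Matrix ι ι R) 1 0 1 * fromBlocks a b b a
      * fromBlocks 1 (-1) 0 1 = fromBlocks (a + b) 0 b (a - b) := by
    rw [fromBlocks_multiply, fromBlocks_multiply]
    ext (i | i) (j | j) <;>
      simp [fromBlocks_apply₁₁, fromBlocks_apply₁₂, fromBlocks_apply₂₁, fromBlocks_apply₂₂,
        Matrix.mul_one, Matrix.one_mul, Matrix.mul_neg, Matrix.neg_mul, Matrix.add_apply,
        Matrix.sub_apply, Matrix.neg_apply] <;> ring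
  have := congrArg Matrix.det h
  rwa [det_mul, det_mul, det_fromBlocks_zero₂₁, det_fromBlocks_zero₂₁,
    det_fromBlocks_zero₁₂, det_one, one_mul, one_mul, mul_one] at this

lemma aux_det_big (a b : Matrix ι ι (ZMod 2)) (r : Matrix ι κ (ZMod 2))
    (s : Matrix κ ι (ZMod 2)) (d : Matrix κ κ (ZMod 2)) :
    (fromBlocks a (fromCols b r) (fromRows b s) (fromBlocks a r s d)).det
      = (a + b).det * ((a + b).det * d.det) := by
  set E : Matrix ι (ι ⊕ κ) (ZMod 2) := fromCols 1 0 with hE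
  have h : fromBlocks (1 : Matrix ι ι (ZMod 2)) E 0 1
      * fromBlocks a (fromCols b r) (fromRows b s) (fromBlocks a r s d)
      * fromBlocks 1 E 0 1
      = fromBlocks (a + b) 0 (fromRows b s) (fromBlocks (a + b) r 0 d) := by
    rw [fromBlocks_multiply, fromBlocks_multiply]
    have char2 : ∀ x : ZMod 2, x + x = 0 := by decide
    ext (i | (i | i)) (j | (j | j)) <;>
      simp [hE, ← fromRows_fromCols_eq_fromBlocks, fromCols_mul_fromRows,
        fromRows_mul, mul_fromCols, Matrix.mul_one, Matrix.one_mul,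
        Matrix.mul_zero, Matrix.zero_mul, Matrix.add_apply, char2] <;>
      first
        | ring1
        | (ring_nf; simp [show (2 : ZMod 2) = 0 by decide])
  have := congrArg Matrix.det h
  rw [det_mul, det_mul, det_fromBlocks_zero₂₁, det_fromBlocks_zero₁₂,
    det_fromBlocks_zero₂₁, det_one] at this
  simpa using this

/-- If `C` is an `n × n` integer matrix, `n = 2n₁ + n₂`, invariant under conjugation
by the permutation `σ = (1 2)(3 4)⋯(2n₁−1 2n₁)`, and `C₀`, `C₁` are the diagonal
blocks of sizes `2n₁` and `n₂`, then `det C ≡ det C₀ · det C₁ (mod 2)`. -/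
theorem stmt17 (n₁ n₂ : ℕ)
    (σ : Equiv.Perm (Fin (2 * n₁ + n₂)))
    (hσ : ∀ i : Fin (2 * n₁ + n₂),
      ((σ i : ℕ) = if (i : ℕ) < 2 * n₁ then
        (if (i : ℕ) % 2 = 0 then (i : ℕ) + 1 else (i : ℕ) - 1) else (i : ℕ)))
    (C : Matrix (Fin (2 * n₁ + n₂)) (Fin (2 * n₁ + n₂)) ℤ)
    (hC : ∀ i j, C i j = C (σ i) (σ j))
    (C₀ : Matrix (Fin (2 * n₁)) (Fin (2 * n₁)) ℤ)
    (hC₀ : ∀ i j, C₀ i j =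
      C (Fin.castLE (Nat.le_add_right _ _) i) (Fin.castLE (Nat.le_add_right _ _) j))
    (C₁ : Matrix (Fin n₂) (Fin n₂) ℤ)
    (hC₁ : ∀ i j, C₁ i j =
      C ⟨2 * n₁ + (i : ℕ), by omega⟩ ⟨2 * n₁ + (j : ℕ), by omega⟩) :
    C.det ≡ C₀.det * C₁.det [ZMOD 2] := by
  -- index embeddings
  have hi0 : ∀ k : Fin n₁, 2 * (k : ℕ) < 2 * n₁ + n₂ := fun k => by have := k.isLt; omega
  have hi1 : ∀ k : Fin n₁, 2 * (k : ℕ) + 1 < 2 * n₁ + n₂ := fun k => by have := k.isLt; omega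
  have hi2 : ∀ j : Fin n₂, 2 * n₁ + (j : ℕ) < 2 * n₁ + n₂ := fun j => by have := j.isLt; omega
  set i₀ : Fin n₁ → Fin (2 * n₁ + n₂) := fun k => ⟨2 * k, hi0 k⟩ with hi₀def
  set i₁ : Fin n₁ → Fin (2 * n₁ + n₂) := fun k => ⟨2 * k + 1, hi1 k⟩ with hi₁def
  set i₂ : Fin n₂ → Fin (2 * n₁ + n₂) := fun j => ⟨2 * n₁ + j, hi2 j⟩ with hi₂def
  -- σ's action
  have hσ0 : ∀ k, σ (i₀ k) = i₁ k := by
    intro k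
    have h := hσ (i₀ k)
    apply Fin.ext
    have hk := k.isLt
    simp only [hi₀def, hi₁def] at h ⊢
    rw [h]
    have h1 : 2 * (k : ℕ) < 2 * n₁ := by omega
    have h2 : 2 * (k : ℕ) % 2 = 0 := by omega
    simp [h1, h2]
  have hσ1 : ∀ k, σ (i₁ k) = i₀ k := by
    intro k
    have h := hσ (i₁ k)
    apply Fin.ext
    have hk := k.isLt
    simp only [hi₀def, hi₁def] at h ⊢
    rw [h]
    have h1 : 2 * (k : ℕ) + 1 < 2 * n₁ := by omega
    have h2 : (2 * (k : ℕ) + 1) % 2 ≠ 0 := by omega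
    simp [h1, h2]
  have hσ2 : ∀ j, σ (i₂ j) = i₂ j := by
    intro j
    have h := hσ (i₂ j)
    apply Fin.ext
    simp only [hi₂def] at h ⊢
    rw [h]
    have h1 : ¬ (2 * n₁ + (j : ℕ) < 2 * n₁) := by omega
    simp [h1]
  -- C entry relations
  have hA : ∀ k l, C (i₁ k) (i₁ l) = C (i₀ k) (i₀ l) := fun k l => by
    rw [hC (i₀ k) (i₀ l), hσ0, hσ0]
  have hB : ∀ k l, C (i₁ k) (i₀ l) = C (i₀ k) (i₁ l) := fun k l => by
    rw [hC (i₀ k) (i₁ l), hσ0, hσ1]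
  have hR : ∀ k j, C (i₁ k) (i₂ j) = C (i₀ k) (i₂ j) := fun k j => by
    rw [hC (i₀ k) (i₂ j), hσ0, hσ2]
  have hS : ∀ j l, C (i₂ j) (i₁ l) = C (i₂ j) (i₀ l) := fun j l => by
    rw [hC (i₂ j) (i₀ l), hσ2, hσ0]
  -- pass to ZMod 2
  let f : ℤ →+* ZMod 2 := Int.castRingHom (ZMod 2)
  set a : Matrix (Fin n₁) (Fin n₁) (ZMod 2) := fun k l => f (C (i₀ k) (i₀ l)) with hadef
  set b : Matrix (Fin n₁) (Fin n₁) (ZMod 2) := fun k l => f (C (i₀ k) (i₁ l)) with hbdef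
  set r : Matrix (Fin n₁) (Fin n₂) (ZMod 2) := fun k j => f (C (i₀ k) (i₂ j)) with hrdef
  set s : Matrix (Fin n₂) (Fin n₁) (ZMod 2) := fun j l => f (C (i₂ j) (i₀ l)) with hsdef
  set d : Matrix (Fin n₂) (Fin n₂) (ZMod 2) := fun j j' => f (C (i₂ j) (i₂ j')) with hddef
  -- the equivalences
  have hcard : Fintype.card (Fin n₁ ⊕ (Fin n₁ ⊕ Fin n₂)) = Fintype.card (Fin (2 * n₁ + n₂)) := by
    simp; omega
  have hcard₀ : Fintype.card (Fin n₁ ⊕ Fin n₁) = Fintype.card (Fin (2 * n₁)) := by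
    simp; omega
  set g : Fin n₁ ⊕ (Fin n₁ ⊕ Fin n₂) → Fin (2 * n₁ + n₂) := Sum.elim i₀ (Sum.elim i₁ i₂) with hgdef
  have hginj : Function.Injective g := by
    rintro (x | (x | x)) (y | (y | y)) h <;>
      simp only [hgdef, Sum.elim_inl, Sum.elim_inr, hi₀def, hi₁def, hi₂def, Fin.mk.injEq] at h <;>
      first
        | (have hx := x.isLt; have hy := y.isLt; omega)
        | (congr 1; first | exact Fin.ext (by omega) | (congr 1; exact Fin.ext (by omega)))
  have hgbij : Function.Bijective g :=
    (Fintype.bijective_iff_injective_and_card g).2 ⟨hginj, hcard⟩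
  set e : (Fin n₁ ⊕ (Fin n₁ ⊕ Fin n₂)) ≃ Fin (2 * n₁ + n₂) := Equiv.ofBijective g hgbij with hedef
  set g₀ : Fin n₁ ⊕ Fin n₁ → Fin (2 * n₁) :=
    Sum.elim (fun k => ⟨2 * k, by have := k.isLt; omega⟩)
      (fun k => ⟨2 * k + 1, by have := k.isLt; omega⟩) with hg₀def
  have hg₀inj : Function.Injective g₀ := by
    rintro (x | x) (y | y) h <;>
      simp only [hg₀def, Sum.elim_inl, Sum.elim_inr, Fin.mk.injEq] at h <;>
      first
        | omega
        | (congr 1; exact Fin.ext (by omega))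
  set e₀ : (Fin n₁ ⊕ Fin n₁) ≃ Fin (2 * n₁) :=
    Equiv.ofBijective g₀ ((Fintype.bijective_iff_injective_and_card g₀).2 ⟨hg₀inj, hcard₀⟩)
    with he₀def
  -- block decompositions
  have hM : (C.map f).submatrix e e
      = Matrix.fromBlocks a (Matrix.fromCols b r) (Matrix.fromRows b s)
        (Matrix.fromBlocks a r s d) := by
    ext (k | (k | k)) (l | (l | l)) <;>
      simp only [Matrix.submatrix_apply, hedef, Equiv.ofBijective_apply, hgdef,
        Sum.elim_inl, Sum.elim_inr, Matrix.map_apply,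
        Matrix.fromBlocks_apply₁₁, Matrix.fromBlocks_apply₁₂,
        Matrix.fromBlocks_apply₂₁, Matrix.fromBlocks_apply₂₂,
        Matrix.fromCols_apply_inl, Matrix.fromCols_apply_inr,
        Matrix.fromRows_apply_inl, Matrix.fromRows_apply_inr,
        hadef, hbdef, hrdef, hsdef, hddef] <;>
      first
        | rfl
        | (rw [hA]; rfl)
        | (rw [hB]; rfl)
        | (rw [hR]; rfl)
        | (rw [hS]; rfl)
  have hM₀ : (C₀.map f).submatrix e₀ e₀ = Matrix.fromBlocks a b b a := by
    ext (k | k) (l | l) <;>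
      simp only [Matrix.submatrix_apply, he₀def, Equiv.ofBijective_apply, hg₀def,
        Sum.elim_inl, Sum.elim_inr, Matrix.map_apply,
        Matrix.fromBlocks_apply₁₁, Matrix.fromBlocks_apply₁₂,
        Matrix.fromBlocks_apply₂₁, Matrix.fromBlocks_apply₂₂,
        hadef, hbdef] <;>
      rw [hC₀] <;>
      [rw [show (Fin.castLE (Nat.le_add_right _ _) ⟨2 * (k:ℕ), _⟩ : Fin (2 * n₁ + n₂)) = i₀ k from
          Fin.ext rfl, show (Fin.castLE (Nat.le_add_right _ _) ⟨2 * (l:ℕ), _⟩ : Fin (2 * n₁ + n₂)) = i₀ l from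
          Fin.ext rfl];
       rw [show (Fin.castLE (Nat.le_add_right _ _) ⟨2 * (k:ℕ), _⟩ : Fin (2 * n₁ + n₂)) = i₀ k from
          Fin.ext rfl, show (Fin.castLE (Nat.le_add_right _ _) ⟨2 * (l:ℕ) + 1, _⟩ : Fin (2 * n₁ + n₂)) = i₁ l from
          Fin.ext rfl];
       rw [show (Fin.castLE (Nat.le_add_right _ _) ⟨2 * (k:ℕ) + 1, _⟩ : Fin (2 * n₁ + n₂)) = i₁ k from
          Fin.ext rfl, show (Fin.castLE (Nat.le_add_right _ _) ⟨2 * (l:ℕ), _⟩ : Fin (2 * n₁ + n₂)) = i₀ l from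
          Fin.ext rfl, hB];
       rw [show (Fin.castLE (Nat.le_add_right _ _) ⟨2 * (k:ℕ) + 1, _⟩ : Fin (2 * n₁ + n₂)) = i₁ k from
          Fin.ext rfl, show (Fin.castLE (Nat.le_add_right _ _) ⟨2 * (l:ℕ) + 1, _⟩ : Fin (2 * n₁ + n₂)) = i₁ l from
          Fin.ext rfl, hA]] <;> rfl
  have hM₁ : C₁.map f = d := by
    ext j j'
    rw [Matrix.map_apply, hC₁]
  -- determinants
  have hsub : a - b = a + b := by
    ext k l
    have : ∀ x : ZMod 2, -x = x := by decide
    simp [sub_eq_add_neg, this]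
  have hdet : (C.map f).det = (a + b).det * ((a + b).det * d.det) := by
    rw [← Matrix.det_submatrix_equiv_self e (C.map f), hM, aux_det_big]
  have hdet₀ : (C₀.map f).det = (a + b).det * (a + b).det := by
    rw [← Matrix.det_submatrix_equiv_self e₀ (C₀.map f), hM₀, aux_det_swapBlocks, hsub]
  -- conclude
  have key : ((C.det : ℤ) : ZMod 2) = ((C₀.det * C₁.det : ℤ) : ZMod 2) := by
    push_cast
    have e1 : ((C.det : ℤ) : ZMod 2) = (C.map f).det := RingHom.map_det f C
    have e2 : ((C₀.det : ℤ) : ZMod 2) = (C₀.map f).det := RingHom.map_det f C₀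
    have e3 : ((C₁.det : ℤ) : ZMod 2) = (C₁.map f).det := RingHom.map_det f C₁
    show (C.map f).det = (C₀.map f).det * (C₁.map f).det
    rw [hdet, hdet₀, hM₁]
    ring
  exact_mod_cast (ZMod.intCast_eq_intCast_iff _ _ 2).mp key
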